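/- (Graph-partitioning guarantee) Suppose ρ is a probability distribution on subgraphs H of G such that every edge e satisfies 1−ε ≤ P_{H∼ρ}(e∈H) ≤ 1, for some ε ∈ [0,1). Then for non-negative weights and potentials with Φ(θ) > 0, the estimate Φ̂_ρ(θ) = √(L_ρ(θ)·U_ρ(θ)) satisfies √(1−ε) ≤ Φ(θ)/Φ̂_ρ(θ) ≤ 1/√(1−ε), where L_ρ(θ) = E_{H∼ρ}[Φ(Π^H(θ))] and U_ρ(θ) = E_{H∼ρ}[Φ(Π^H_ρ(θ))] with Π^H(θ)_e = θ_e·1(e∈H) and Π^H_ρ(θ)_e = θ_e·1(e∈H)/ρ_e. -/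

import Mathlib

open scoped Classical

/-- The log-partition function of a pairwise graphical model on the graph `G`. -/
noncomputable def logPartitionFn {V X : Type*} [Fintype V] [DecidableEq V] [Fintype X]
    (G : SimpleGraph V) [DecidableRel G.Adj]
    (ψ : Sym2 V → (V → X) → ℝ) (θ : Sym2 V → ℝ) : ℝ :=
  Real.log (∑ x : V → X, Real.exp (∑ e ∈ G.edgeFinset, θ e * ψ e x))

section Aux
variable {V X : Type*} [Fintype V] [DecidableEq V] [Fintype X] [Nonempty X]
  (G : SimpleGraph V) [DecidableRel G.Adj] (ψ : Sym2 V → (V → X) → ℝ)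

private lemma Zpos (θ : Sym2 V → ℝ) :
    0 < ∑ x : V → X, Real.exp (∑ e ∈ G.edgeFinset, θ e * ψ e x) :=
  Finset.sum_pos (fun _ _ => Real.exp_pos _) Finset.univ_nonempty

private lemma lpf_congr {θ₁ θ₂ : Sym2 V → ℝ} (h : ∀ e ∈ G.edgeFinset, θ₁ e = θ₂ e) :
    logPartitionFn G ψ θ₁ = logPartitionFn G ψ θ₂ := by
  unfold logPartitionFn
  rw [Finset.sum_congr rfl fun x _ => congrArg Real.exp
    (Finset.sum_congr rfl fun e he => by rw [h e he])]

private lemma lpf_mono (hψ : ∀ e x, 0 ≤ ψ e x) {θ₁ θ₂ : Sym2 V → ℝ}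
    (h : ∀ e ∈ G.edgeFinset, θ₁ e ≤ θ₂ e) :
    logPartitionFn G ψ θ₁ ≤ logPartitionFn G ψ θ₂ := by
  unfold logPartitionFn
  refine Real.log_le_log (Zpos G ψ θ₁) ?_
  refine Finset.sum_le_sum fun x _ => ?_
  exact Real.exp_le_exp.2 (Finset.sum_le_sum fun e he =>
    mul_le_mul_of_nonneg_right (h e he) (hψ e x))

private lemma logsum_scale {α : Type*} [Fintype α] [Nonempty α] (S : α → ℝ)
    {c : ℝ} (hc : 1 ≤ c) :
    Real.log (∑ x : α, Real.exp (S x * c)) ≤ c * Real.log (∑ x : α, Real.exp (S x)) := by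
  have hZ0 : 0 < ∑ x : α, Real.exp (S x) :=
    Finset.sum_pos (fun _ _ => Real.exp_pos _) Finset.univ_nonempty
  set Z := ∑ x : α, Real.exp (S x) with hZdef
  have key : ∑ x : α, Real.exp (S x * c) ≤ Z ^ c := by
    have hterm : ∀ x : α, Real.exp (S x * c) ≤ Z ^ (c - 1) * Real.exp (S x) := by
      intro x
      rw [Real.exp_mul]
      have h1 : Real.exp (S x) ≤ Z :=
        Finset.single_le_sum (f := fun y => Real.exp (S y))
          (fun y _ => (Real.exp_pos _).le) (Finset.mem_univ x)
      calc Real.exp (S x) ^ c = Real.exp (S x) ^ (c - 1 + 1) := by norm_num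
        _ = Real.exp (S x) ^ (c - 1) * Real.exp (S x) ^ (1 : ℝ) :=
            Real.rpow_add (Real.exp_pos _) _ _
        _ = Real.exp (S x) ^ (c - 1) * Real.exp (S x) := by rw [Real.rpow_one]
        _ ≤ Z ^ (c - 1) * Real.exp (S x) :=
            mul_le_mul_of_nonneg_right
              (Real.rpow_le_rpow (Real.exp_pos _).le h1 (by linarith))
              (Real.exp_pos _).le
    calc ∑ x : α, Real.exp (S x * c)
        ≤ ∑ x : α, Z ^ (c - 1) * Real.exp (S x) := Finset.sum_le_sum fun x _ => hterm x
      _ = Z ^ (c - 1) * Z := by rw [← Finset.mul_sum]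
      _ = Z ^ (c - 1) * Z ^ (1 : ℝ) := by rw [Real.rpow_one]
      _ = Z ^ (c - 1 + 1) := (Real.rpow_add hZ0 _ _).symm
      _ = Z ^ c := by norm_num
  calc Real.log (∑ x : α, Real.exp (S x * c))
      ≤ Real.log (Z ^ c) :=
        Real.log_le_log (Finset.sum_pos (fun _ _ => Real.exp_pos _) Finset.univ_nonempty) key
    _ = c * Real.log Z := Real.log_rpow hZ0 c

private lemma lpf_scale {c : ℝ} (hc : 1 ≤ c) (θ : Sym2 V → ℝ) :
    logPartitionFn G ψ (fun e => c * θ e) ≤ c * logPartitionFn G ψ θ := by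
  unfold logPartitionFn
  have hrw : ∀ x : V → X, (∑ e ∈ G.edgeFinset, c * θ e * ψ e x)
      = (∑ e ∈ G.edgeFinset, θ e * ψ e x) * c := by
    intro x
    rw [Finset.sum_mul]; exact Finset.sum_congr rfl fun e _ => by ring
  rw [Finset.sum_congr rfl fun x _ => congrArg Real.exp (hrw x)]
  exact logsum_scale (fun x => ∑ e ∈ G.edgeFinset, θ e * ψ e x) hc


private lemma lpf_scale2 {c : ℝ} (hc0 : 0 < c) (hc1 : c ≤ 1) (θ : Sym2 V → ℝ) :
    c * logPartitionFn G ψ θ ≤ logPartitionFn G ψ (fun e => c * θ e) := by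
  have h := lpf_scale G ψ (c := 1 / c) ((le_div_iff₀ hc0).2 (by linarith))
    (fun e => c * θ e)
  have heq : (fun e => 1 / c * (c * θ e)) = θ := by
    funext e; field_simp
  rw [heq] at h
  calc c * logPartitionFn G ψ θ
      ≤ c * (1 / c * logPartitionFn G ψ (fun e => c * θ e)) :=
        mul_le_mul_of_nonneg_left h hc0.le
    _ = logPartitionFn G ψ (fun e => c * θ e) := by field_simp

private lemma lpf_jensen {ι : Type*} [Fintype ι] (w : ι → ℝ) (hw : ∀ i, 0 ≤ w i)
    (hw1 : ∑ i, w i = 1) (ϑ : ι → Sym2 V → ℝ) :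
    logPartitionFn G ψ (fun e => ∑ i, w i * ϑ i e)
      ≤ ∑ i, w i * logPartitionFn G ψ (ϑ i) := by
  unfold logPartitionFn
  set S : ι → (V → X) → ℝ := fun i x => ∑ e ∈ G.edgeFinset, ϑ i e * ψ e x with hSdef
  set A : ι → ℝ := fun i => ∑ x : V → X, Real.exp (S i x) with hAdef
  have hA0 : ∀ i, 0 < A i := fun i => Zpos G ψ (ϑ i)
  have hterm : ∀ x : V → X,
      Real.exp (∑ e ∈ G.edgeFinset, (∑ i, w i * ϑ i e) * ψ e x)
        = ∏ i, Real.exp (S i x) ^ w i := by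
    intro x
    have h1 : (∑ e ∈ G.edgeFinset, (∑ i, w i * ϑ i e) * ψ e x)
        = ∑ i, S i x * w i := by
      calc ∑ e ∈ G.edgeFinset, (∑ i, w i * ϑ i e) * ψ e x
          = ∑ e ∈ G.edgeFinset, ∑ i, w i * (ϑ i e * ψ e x) := by
            refine Finset.sum_congr rfl fun e _ => ?_
            rw [Finset.sum_mul]
            exact Finset.sum_congr rfl fun i _ => by ring
        _ = ∑ i, ∑ e ∈ G.edgeFinset, w i * (ϑ i e * ψ e x) := Finset.sum_comm
        _ = ∑ i, S i x * w i := by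
            refine Finset.sum_congr rfl fun i _ => ?_
            rw [← Finset.mul_sum, hSdef]; ring
    rw [h1, Real.exp_sum]
    exact Finset.prod_congr rfl fun i _ => Real.exp_mul _ _
  have hxle : ∀ x : V → X, ∏ i, Real.exp (S i x) ^ w i
      ≤ (∏ i, A i ^ w i) * ∑ i, w i * (Real.exp (S i x) / A i) := by
    intro x
    have h2 : ∏ i, Real.exp (S i x) ^ w i
        = (∏ i, A i ^ w i) * ∏ i, (Real.exp (S i x) / A i) ^ w i := by
      rw [← Finset.prod_mul_distrib]
      refine Finset.prod_congr rfl fun i _ => ?_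
      rw [← Real.mul_rpow (hA0 i).le (by positivity)]
      congr 1
      field_simp
      exact (div_self (hA0 i).ne').symm
    rw [h2]
    refine mul_le_mul_of_nonneg_left ?_ (by positivity)
    exact Real.geom_mean_le_arith_mean_weighted Finset.univ w _
      (fun i _ => hw i) hw1 (fun i _ => by positivity)
  have hsum : ∑ x : V → X, ∑ i, w i * (Real.exp (S i x) / A i) = 1 := by
    rw [Finset.sum_comm]
    calc ∑ i, ∑ x : V → X, w i * (Real.exp (S i x) / A i)
        = ∑ i, w i := by
          refine Finset.sum_congr rfl fun i _ => ?_
          rw [← Finset.mul_sum, ← Finset.sum_div, div_self (hA0 i).ne', mul_one]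
      _ = 1 := hw1
  have key : ∑ x : V → X, Real.exp (∑ e ∈ G.edgeFinset, (∑ i, w i * ϑ i e) * ψ e x)
      ≤ ∏ i, A i ^ w i := by
    calc ∑ x : V → X, Real.exp (∑ e ∈ G.edgeFinset, (∑ i, w i * ϑ i e) * ψ e x)
        = ∑ x : V → X, ∏ i, Real.exp (S i x) ^ w i :=
          Finset.sum_congr rfl fun x _ => hterm x
      _ ≤ ∑ x : V → X, (∏ i, A i ^ w i) * ∑ i, w i * (Real.exp (S i x) / A i) :=
          Finset.sum_le_sum fun x _ => hxle x
      _ = (∏ i, A i ^ w i) * ∑ x : V → X, ∑ i, w i * (Real.exp (S i x) / A i) := by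
          rw [← Finset.mul_sum]
      _ = ∏ i, A i ^ w i := by rw [hsum, mul_one]
  calc Real.log (∑ x : V → X, Real.exp (∑ e ∈ G.edgeFinset, (∑ i, w i * ϑ i e) * ψ e x))
      ≤ Real.log (∏ i, A i ^ w i) := Real.log_le_log (Zpos G ψ _) key
    _ = ∑ i, Real.log (A i ^ w i) :=
        Real.log_prod (fun i _ => by positivity)
    _ = ∑ i, w i * Real.log (A i) :=
        Finset.sum_congr rfl fun i _ => Real.log_rpow (hA0 i) _
end Aux

/-- Graph-partitioning guarantee: if `ρ` is a probability distribution on subgraphs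
(edge subsets) `H ⊆ E` of `G` such that every edge satisfies
`1−ε ≤ ρ_e = P_{H∼ρ}(e∈H) ≤ 1` with `0 ≤ ε < 1`, then for non-negative weights and
potentials with `Φ(θ) > 0`, the estimate `Φ̂_ρ(θ) = √(L_ρ(θ)·U_ρ(θ))` satisfies
`√(1−ε) ≤ Φ(θ)/Φ̂_ρ(θ) ≤ 1/√(1−ε)`. -/
theorem graph_partitioning_guarantee
    {V X : Type*} [Fintype V] [DecidableEq V] [Fintype X] [Nonempty X]
    (G : SimpleGraph V) [DecidableRel G.Adj]
    (ψ : Sym2 V → (V → X) → ℝ) (hψ : ∀ e x, 0 ≤ ψ e x)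
    (hpair : ∀ e ∈ G.edgeSet, ∀ x y : V → X, (∀ v ∈ e, x v = y v) → ψ e x = ψ e y)
    (θ : Sym2 V → ℝ) (hθ : ∀ e, 0 ≤ θ e)
    (hΦ : 0 < logPartitionFn G ψ θ)
    {ι : Type*} [Fintype ι] (Hs : ι → Finset (Sym2 V))
    (hsub : ∀ i, Hs i ⊆ G.edgeFinset)
    (ρ : ι → ℝ) (hρ0 : ∀ i, 0 ≤ ρ i) (hρ1 : ∑ i, ρ i = 1)
    (ε : ℝ) (hε0 : 0 ≤ ε) (hε1 : ε < 1)
    (hedge : ∀ e ∈ G.edgeFinset,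
      1 - ε ≤ ∑ i, ρ i * (if e ∈ Hs i then (1 : ℝ) else 0) ∧
      ∑ i, ρ i * (if e ∈ Hs i then (1 : ℝ) else 0) ≤ 1)
    (L U phiHat : ℝ)
    (hL : L = ∑ i, ρ i * logPartitionFn G ψ (fun e =>
        if e ∈ Hs i then θ e else 0))
    (hU : U = ∑ i, ρ i * logPartitionFn G ψ (fun e =>
        if e ∈ Hs i then
          θ e / (∑ j, ρ j * (if e ∈ Hs j then (1 : ℝ) else 0))
        else 0))
    (hhat : phiHat = Real.sqrt (L * U)) :
    Real.sqrt (1 - ε) ≤ logPartitionFn G ψ θ / phiHat ∧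
      logPartitionFn G ψ θ / phiHat ≤ 1 / Real.sqrt (1 - ε) := by
  have hε' : (0 : ℝ) < 1 - ε := by linarith
  have hρe_pos : ∀ e ∈ G.edgeFinset,
      0 < ∑ j, ρ j * (if e ∈ Hs j then (1 : ℝ) else 0) :=
    fun e he => lt_of_lt_of_le hε' (hedge e he).1
  set P := logPartitionFn G ψ θ with hPdef
  -- L ≤ P
  have hLle : L ≤ P := by
    rw [hL]
    calc ∑ i, ρ i * logPartitionFn G ψ (fun e => if e ∈ Hs i then θ e else 0)
        ≤ ∑ i, ρ i * P := Finset.sum_le_sum fun i _ =>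
          mul_le_mul_of_nonneg_left (lpf_mono G ψ hψ fun e _ => by
            by_cases h : e ∈ Hs i <;> simp [h, hθ e]) (hρ0 i)
      _ = P := by rw [← Finset.sum_mul, hρ1, one_mul]
  -- P ≤ U
  have hUge : P ≤ U := by
    rw [hU]
    have hcong : P = logPartitionFn G ψ
        (fun e => ∑ i, ρ i * (if e ∈ Hs i then
          θ e / (∑ j, ρ j * (if e ∈ Hs j then (1 : ℝ) else 0)) else 0)) := by
      refine lpf_congr G ψ fun e he => ?_
      have hpe : 0 < ∑ j, ρ j * (if e ∈ Hs j then (1 : ℝ) else 0) := hρe_pos e he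
      have hfac : ∀ i, ρ i * (if e ∈ Hs i then
          θ e / (∑ j, ρ j * (if e ∈ Hs j then (1 : ℝ) else 0)) else 0)
          = (θ e / (∑ j, ρ j * (if e ∈ Hs j then (1 : ℝ) else 0)))
            * (ρ i * (if e ∈ Hs i then (1 : ℝ) else 0)) := by
        intro i; by_cases h : e ∈ Hs i <;> simp [h] <;> ring
      rw [Finset.sum_congr rfl fun i _ => hfac i, ← Finset.mul_sum,
        div_mul_cancel₀ _ hpe.ne']
    rw [hcong]
    exact lpf_jensen G ψ ρ hρ0 hρ1 _
  -- U ≤ P / (1 - ε)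
  have hUle : U ≤ P / (1 - ε) := by
    rw [hU]
    have hc : (1 : ℝ) ≤ 1 / (1 - ε) := by rw [le_div_iff₀ hε']; linarith
    have hi : ∀ i, logPartitionFn G ψ (fun e => if e ∈ Hs i then
        θ e / (∑ j, ρ j * (if e ∈ Hs j then (1 : ℝ) else 0)) else 0)
        ≤ 1 / (1 - ε) * P := by
      intro i
      calc logPartitionFn G ψ (fun e => if e ∈ Hs i then
            θ e / (∑ j, ρ j * (if e ∈ Hs j then (1 : ℝ) else 0)) else 0)
          ≤ logPartitionFn G ψ (fun e => 1 / (1 - ε) * θ e) := by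
            refine lpf_mono G ψ hψ fun e he => ?_
            by_cases h : e ∈ Hs i
            · simp only [h, if_true]
              rw [show (1 : ℝ) / (1 - ε) * θ e = θ e / (1 - ε) by ring]
              gcongr
              · exact hθ e
              · exact (hedge e he).1
            · simp only [h, if_false]
              have := hθ e
              positivity
        _ ≤ 1 / (1 - ε) * P := lpf_scale G ψ hc θ
    calc ∑ i, ρ i * logPartitionFn G ψ (fun e => if e ∈ Hs i then
          θ e / (∑ j, ρ j * (if e ∈ Hs j then (1 : ℝ) else 0)) else 0)
        ≤ ∑ i, ρ i * (1 / (1 - ε) * P) := Finset.sum_le_sum fun i _ =>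
          mul_le_mul_of_nonneg_left (hi i) (hρ0 i)
      _ = P / (1 - ε) := by rw [← Finset.sum_mul, hρ1, one_mul]; ring
  -- (1 - ε) * U ≤ L
  have hLU : (1 - ε) * U ≤ L := by
    rw [hL, hU, Finset.mul_sum]
    refine Finset.sum_le_sum fun i _ => ?_
    have h1 : (1 - ε) * logPartitionFn G ψ (fun e => if e ∈ Hs i then
        θ e / (∑ j, ρ j * (if e ∈ Hs j then (1 : ℝ) else 0)) else 0)
        ≤ logPartitionFn G ψ (fun e => if e ∈ Hs i then θ e else 0) := by
      calc (1 - ε) * logPartitionFn G ψ (fun e => if e ∈ Hs i then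
            θ e / (∑ j, ρ j * (if e ∈ Hs j then (1 : ℝ) else 0)) else 0)
          ≤ logPartitionFn G ψ (fun e => (1 - ε) * (if e ∈ Hs i then
            θ e / (∑ j, ρ j * (if e ∈ Hs j then (1 : ℝ) else 0)) else 0)) :=
            lpf_scale2 G ψ hε' (by linarith) _
        _ ≤ logPartitionFn G ψ (fun e => if e ∈ Hs i then θ e else 0) := by
            refine lpf_mono G ψ hψ fun e he => ?_
            by_cases h : e ∈ Hs i
            · simp only [h, if_true]
              have hpe : 0 < ∑ j, ρ j * (if e ∈ Hs j then (1 : ℝ) else 0) :=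
                hρe_pos e he
              calc (1 - ε) * (θ e / (∑ j, ρ j * (if e ∈ Hs j then (1 : ℝ) else 0)))
                  ≤ (∑ j, ρ j * (if e ∈ Hs j then (1 : ℝ) else 0))
                    * (θ e / (∑ j, ρ j * (if e ∈ Hs j then (1 : ℝ) else 0))) :=
                    mul_le_mul_of_nonneg_right (hedge e he).1
                      (div_nonneg (hθ e) hpe.le)
                _ = θ e := by rw [mul_comm, div_mul_cancel₀ _ hpe.ne']
            · simp [h]
    calc (1 - ε) * (ρ i * logPartitionFn G ψ (fun e => if e ∈ Hs i then
          θ e / (∑ j, ρ j * (if e ∈ Hs j then (1 : ℝ) else 0)) else 0))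
        = ρ i * ((1 - ε) * logPartitionFn G ψ (fun e => if e ∈ Hs i then
          θ e / (∑ j, ρ j * (if e ∈ Hs j then (1 : ℝ) else 0)) else 0)) := by ring
      _ ≤ ρ i * logPartitionFn G ψ (fun e => if e ∈ Hs i then θ e else 0) :=
          mul_le_mul_of_nonneg_left h1 (hρ0 i)
  -- positivity and product bounds
  have hU0 : 0 < U := lt_of_lt_of_le hΦ hUge
  have hL0 : 0 < L := lt_of_lt_of_le (by positivity) hLU
  have hlo2 : (1 - ε) * (P * P) ≤ L * U := by
    have hUU : P * P ≤ U * U := mul_le_mul hUge hUge hΦ.le hU0.le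
    have h1 : (1 - ε) * (P * P) ≤ (1 - ε) * (U * U) :=
      mul_le_mul_of_nonneg_left hUU hε'.le
    have h2 : (1 - ε) * (U * U) ≤ L * U := by
      calc (1 - ε) * (U * U) = ((1 - ε) * U) * U := by ring
        _ ≤ L * U := mul_le_mul_of_nonneg_right hLU hU0.le
    linarith
  have hhi2 : L * U ≤ P * P / (1 - ε) := by
    calc L * U ≤ P * (P / (1 - ε)) :=
          mul_le_mul hLle hUle hU0.le hΦ.le
      _ = P * P / (1 - ε) := by ring
  have hhat0 : 0 < phiHat := by
    rw [hhat]; exact Real.sqrt_pos.2 (mul_pos hL0 hU0)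
  have hsq : 0 < Real.sqrt (1 - ε) := Real.sqrt_pos.2 hε'
  have hup : phiHat ≤ P / Real.sqrt (1 - ε) := by
    rw [hhat]
    have h := Real.sqrt_le_sqrt hhi2
    rwa [Real.sqrt_div (by positivity) (1 - ε), Real.sqrt_mul_self hΦ.le] at h
  have hlo : Real.sqrt (1 - ε) * P ≤ phiHat := by
    rw [hhat]
    have h := Real.sqrt_le_sqrt hlo2
    rwa [Real.sqrt_mul hε'.le, Real.sqrt_mul_self hΦ.le] at h
  constructor
  · have h5 : Real.sqrt (1 - ε) * phiHat ≤ P := by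
      calc Real.sqrt (1 - ε) * phiHat
          ≤ Real.sqrt (1 - ε) * (P / Real.sqrt (1 - ε)) :=
            mul_le_mul_of_nonneg_left hup (Real.sqrt_nonneg _)
        _ = P := by field_simp
    exact (le_div_iff₀ hhat0).2 h5
  · rw [div_le_div_iff₀ hhat0 hsq]
    nlinarith [hlo]
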